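/- arXiv:1607.01197 — 3 statements merged into one kernel-verified Lean document; each statement's English description precedes it below -/
import Mathlib

section
/- Assume the extension E/F is ramified and let π_E be a uniformizer of E. Let L be a lattice in E with l(L) = 0 (equivalently, O_E·L ⊆ L). Then [π_E·L] is adjacent to [L], satisfies l(π_E·L) = 0, and is the unique class adjacent to [L] with l = 0; every other class adjacent to [L] satisfies l = 1. -/
/-!
`F` is a nonarchimedean local field: a field complete with respect to a discrete valuation
(encoded by `Valued F ℤₘ₀` together with `CompleteSpace F` and the requirement that the
valuation ring is a discrete valuation ring) with finite residue field.
`E/F` is a quadratic field extension, with `O_E` the valuation ring of `E`, realized as the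
integral closure of `O_F` in `E`.
-/

open scoped Multiplicative Pointwise

noncomputable section
set_option linter.unusedSectionVars false
set_option maxHeartbeats 1000000
set_option synthInstance.maxHeartbeats 400000

variable (F : Type*) [Field F] [Valued F (WithZero (Multiplicative ℤ))] [CompleteSpace F]

/-- The valuation ring `O_F` of `F`. -/
noncomputable abbrev OF : ValuationSubring F := (Valued.v : Valuation F (WithZero (Multiplicative ℤ))).valuationSubring

variable (E : Type*) [Field E] [Algebra F E]

/-- A lattice in `E`: a finitely generated `O_F`-submodule of `E` containing an `F`-basis of
`E` (equivalently, spanning `E` as an `F`-vector space). -/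
def IsLattice (L : Submodule (OF F) E) : Prop :=
  L.FG ∧ Submodule.span F (L : Set E) = ⊤

/-- The multiplier ring `O_L = {x ∈ E | x·L ⊆ L}` of an `O_F`-submodule `L` of `E`. -/
def mult (L : Submodule (OF F) E) : Set E := {x : E | ∀ y ∈ L, x * y ∈ L}

/-- The order `O_F + π^m·O_E` of `E`, where `O_E` is the valuation ring (= integral closure
of `O_F`) of `E` and `π` is a uniformizer of `F`. -/
def ordSet (π : OF F) (m : ℕ) : Set E :=
  {x : E | ∃ a : OF F, ∃ b : integralClosure (OF F) E,
    x = algebraMap (OF F) E a + (algebraMap F E (π : F)) ^ m * (b : E)}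

/-- Two `O_F`-submodules of `E` are homothetic if they differ by scaling by an element
of `F^*`. -/
def Homothetic (L L' : Submodule (OF F) E) : Prop :=
  ∃ c : F, c ≠ 0 ∧ (L' : Set E) = c • (L : Set E)

/-- The homothety classes of two lattices `L`, `L'` are adjacent (as vertices of the
Bruhat–Tits tree) if they are distinct and admit representatives `M`, `M'` with
`π·M ⊊ M' ⊊ M`. -/
def Adjacent (π : OF F) (L L' : Submodule (OF F) E) : Prop :=
  ¬ Homothetic F E L L' ∧
    ∃ M M' : Submodule (OF F) E, Homothetic F E L M ∧ Homothetic F E L' M' ∧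
      (algebraMap F E (π : F)) • (M : Set E) ⊂ (M' : Set E) ∧ (M' : Set E) ⊂ (M : Set E)

-- ===== helpers =====
lemma ordSet_zero (π : OF F) :
    ordSet F E π 0 = (integralClosure (OF F) E : Set E) := by
  ext z
  constructor
  · rintro ⟨a, b, rfl⟩
    simpa using add_mem ((integralClosure (OF F) E).algebraMap_mem a) b.2
  · intro hz
    exact ⟨0, ⟨z, hz⟩, by simp⟩

lemma F_smul_set (c : F) (s : Set E) : c • s = (algebraMap F E c) • s := by
  ext z
  constructor
  · rintro ⟨y, hy, rfl⟩; exact ⟨y, hy, by simp [Algebra.smul_def]⟩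
  · rintro ⟨y, hy, rfl⟩; exact ⟨y, hy, by simp [Algebra.smul_def]⟩

lemma mem_smul_O {a z : E} :
    z ∈ a • (integralClosure (OF F) E : Set E) ↔
      ∃ b : integralClosure (OF F) E, z = a * (b : E) := by
  constructor
  · rintro ⟨y, hy, rfl⟩; exact ⟨⟨y, hy⟩, rfl⟩
  · rintro ⟨b, rfl⟩; exact ⟨(b : E), b.2, rfl⟩

lemma coe_one_of_mul {o o' : integralClosure (OF F) E} (h : o * o' = 1) :
    (o : E) * (o' : E) = 1 := by exact_mod_cast congrArg (Subtype.val) h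

lemma isUnit_O_iff {o : integralClosure (OF F) E} :
    IsUnit o ↔ ∃ o' : integralClosure (OF F) E, (o : E) * (o' : E) = 1 := by
  rw [isUnit_iff_exists]
  constructor
  · rintro ⟨o', h, _⟩; exact ⟨o', coe_one_of_mul F E h⟩
  · rintro ⟨o', h⟩
    have h' : o * o' = 1 := Subtype.coe_injective (by push_cast; exact h)
    exact ⟨o', h', by rwa [mul_comm] at h'⟩

lemma smul_O_subset {a b : E} (hb : b ≠ 0) :
    a • (integralClosure (OF F) E : Set E) ⊆ b • (integralClosure (OF F) E : Set E) ↔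
      ∃ o : integralClosure (OF F) E, a = b * (o : E) := by
  constructor
  · intro h
    have : a ∈ a • (integralClosure (OF F) E : Set E) :=
      (mem_smul_O F E).mpr ⟨1, by simp⟩
    exact (mem_smul_O F E).mp (h this)
  · rintro ⟨o, rfl⟩ z hz
    obtain ⟨o', rfl⟩ := (mem_smul_O F E).mp hz
    exact (mem_smul_O F E).mpr ⟨o * o', by push_cast; ring⟩

lemma smul_O_eq {a b : E} (hb : b ≠ 0) :
    a • (integralClosure (OF F) E : Set E) = b • (integralClosure (OF F) E : Set E) ↔
      ∃ o : integralClosure (OF F) E, a = b * (o : E) ∧ IsUnit o := by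
  constructor
  · intro h
    obtain ⟨o, ho⟩ := (smul_O_subset F E hb).mp h.le
    have ha : a ≠ 0 := by
      intro h0
      rw [h0] at h
      have : b ∈ (0:E) • (integralClosure (OF F) E : Set E) := h ▸ (mem_smul_O F E).mpr ⟨1, by simp⟩
      obtain ⟨o', ho'⟩ := (mem_smul_O F E).mp this
      simp at ho'; exact hb ho'
    obtain ⟨o', ho'⟩ := (smul_O_subset F E ha).mp h.ge
    refine ⟨o, ho, (isUnit_O_iff F E).mpr ⟨o', ?_⟩⟩
    have key : b * ((o : E) * (o' : E)) = b * 1 := by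
      rw [mul_one]
      calc b * ((o : E) * (o' : E)) = (b * (o:E)) * (o':E) := by ring
        _ = a * (o':E) := by rw [← ho]
        _ = b := ho'.symm
    exact mul_left_cancel₀ hb key
  · rintro ⟨o, rfl, ho⟩
    obtain ⟨oi, hoi⟩ := (isUnit_O_iff F E).mp ho
    apply subset_antisymm ((smul_O_subset F E hb).mpr ⟨o, rfl⟩)
    intro z hz
    obtain ⟨o', rfl⟩ := (mem_smul_O F E).mp hz
    refine (mem_smul_O F E).mpr ⟨oi * o', ?_⟩
    push_cast
    calc b * (o' : E) = b * ((o:E) * (oi:E)) * o' := by rw [hoi]; ring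
      _ = b * (o:E) * ((oi:E) * (o':E)) := by ring

lemma smul_O_ssubset {a b : E} (hb : b ≠ 0) :
    a • (integralClosure (OF F) E : Set E) ⊂ b • (integralClosure (OF F) E : Set E) ↔
      ∃ o : integralClosure (OF F) E, a = b * (o : E) ∧ ¬ IsUnit o := by
  constructor
  · rintro ⟨hsub, hns⟩
    obtain ⟨o, ho⟩ := (smul_O_subset F E hb).mp hsub
    refine ⟨o, ho, fun hu => hns ?_⟩
    exact ((smul_O_eq F E hb).mpr ⟨o, ho, hu⟩).ge
  · rintro ⟨o, rfl, ho⟩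
    refine ⟨(smul_O_subset F E hb).mpr ⟨o, rfl⟩, fun h => ho ?_⟩
    have hbmem : b ∈ b • (integralClosure (OF F) E : Set E) := (mem_smul_O F E).mpr ⟨1, by simp⟩
    obtain ⟨o', ho'⟩ := (mem_smul_O F E).mp (h hbmem)
    refine (isUnit_O_iff F E).mpr ⟨o', ?_⟩
    have key : b * ((o : E) * (o' : E)) = b * 1 := by
      rw [mul_one]
      calc b * ((o : E) * (o' : E)) = (b * (o:E)) * (o':E) := by ring
        _ = b := ho'.symm
    exact mul_left_cancel₀ hb key

lemma algebraMap_ne_zero {c : F} (hc : c ≠ 0) : algebraMap F E c ≠ 0 :=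
  fun h => hc ((algebraMap F E).injective (by rw [h, map_zero]))

lemma mult_eq_of_smul {c : E} (hc : c ≠ 0) {L L' : Submodule (OF F) E}
    (h : (L' : Set E) = c • (L : Set E)) : mult F E L' = mult F E L := by
  have hmem : ∀ z : E, z ∈ L' ↔ ∃ y ∈ L, z = c * y := by
    intro z
    rw [← SetLike.mem_coe, h]
    constructor
    · rintro ⟨y, hy, rfl⟩; exact ⟨y, hy, rfl⟩
    · rintro ⟨y, hy, rfl⟩; exact ⟨y, hy, rfl⟩
  ext z
  constructor
  · intro hz y hy
    have h1 : c * y ∈ L' := (hmem _).mpr ⟨y, hy, rfl⟩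
    obtain ⟨w, hw, hzw⟩ := (hmem _).mp (hz _ h1)
    have : z * y = w := by
      apply mul_left_cancel₀ hc
      rw [← hzw]; ring
    rwa [this]
  · intro hz y' hy'
    obtain ⟨y, hy, rfl⟩ := (hmem _).mp hy'
    exact (hmem _).mpr ⟨z * y, hz y hy, by ring⟩

lemma homothetic_symm {L L' : Submodule (OF F) E} (h : Homothetic F E L L') :
    Homothetic F E L' L := by
  obtain ⟨c, hc, hs⟩ := h
  refine ⟨c⁻¹, inv_ne_zero hc, ?_⟩
  rw [hs]
  ext z
  constructor
  · intro hz; exact ⟨c • z, ⟨z, hz, rfl⟩, by simp [smul_smul, inv_mul_cancel₀ hc]⟩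
  · rintro ⟨y, ⟨w, hw, rfl⟩, rfl⟩
    simpa [smul_smul, inv_mul_cancel₀ hc] using hw

lemma homothetic_trans {L L' L'' : Submodule (OF F) E}
    (h : Homothetic F E L L') (h' : Homothetic F E L' L'') : Homothetic F E L L'' := by
  obtain ⟨c, hc, hs⟩ := h
  obtain ⟨d, hd, hs'⟩ := h'
  refine ⟨d * c, mul_ne_zero hd hc, ?_⟩
  rw [hs', hs]
  ext z
  constructor
  · rintro ⟨y, ⟨w, hw, rfl⟩, rfl⟩; exact ⟨w, hw, by simp [smul_smul]⟩
  · rintro ⟨w, hw, rfl⟩; exact ⟨c • w, ⟨w, hw, rfl⟩, by simp [smul_smul]⟩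

/-- Multiplication by `c` as an `O_F`-linear endomorphism of `E`. -/
def mulE (c : E) : E →ₗ[OF F] E where
  toFun x := c * x
  map_add' := mul_add c
  map_smul' a x := by simp only [Algebra.smul_def, RingHom.id_apply]; ring

lemma lattice_of_set_eq {c : E} (hc : c ≠ 0) {L L' : Submodule (OF F) E}
    (h : (L' : Set E) = c • (L : Set E)) (hL : IsLattice F E L) : IsLattice F E L' := by
  have himage : (L' : Set E) = (mulE F E c) '' (L : Set E) := by
    rw [h]; ext z
    constructor
    · rintro ⟨y, hy, rfl⟩; exact ⟨y, hy, rfl⟩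
    · rintro ⟨y, hy, rfl⟩; exact ⟨y, hy, rfl⟩
  have hmap : L' = Submodule.map (mulE F E c) L := SetLike.ext' (by rw [himage]; simp)
  constructor
  · rw [hmap]; exact hL.1.map _
  · have hg : Submodule.span F ((LinearMap.mulLeft F c) '' (L : Set E)) = ⊤ := by
      rw [Submodule.span_image, hL.2, Submodule.map_top, LinearMap.range_eq_top]
      intro z
      exact ⟨c⁻¹ * z, by simp [LinearMap.mulLeft_apply]; field_simp⟩
    have : (L' : Set E) = (LinearMap.mulLeft F c) '' (L : Set E) := himage
    rw [this, hg]

lemma unit_pow_eq [IsDiscreteValuationRing (integralClosure (OF F) E)]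
    {πE : integralClosure (OF F) E} (hπE : Irreducible πE)
    {w w' : integralClosure (OF F) E} (hw : IsUnit w) (hw' : IsUnit w')
    {m n : ℕ} (h : w * πE ^ m = w' * πE ^ n) : m = n := by
  have d1 : πE ^ n ∣ w * πE ^ m := ⟨w', by rw [h]; ring⟩
  have d2 : πE ^ m ∣ w' * πE ^ n := ⟨w, by rw [← h]; ring⟩
  rw [hw.dvd_mul_left] at d1
  rw [hw'.dvd_mul_left] at d2
  have h1 := (pow_dvd_pow_iff hπE.ne_zero hπE.not_isUnit).mp d1
  have h2 := (pow_dvd_pow_iff hπE.ne_zero hπE.not_isUnit).mp d2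
  omega

lemma of_OF_even [IsDiscreteValuationRing (OF F)]
    [IsDiscreteValuationRing (integralClosure (OF F) E)]
    {π : OF F} (hπ : Irreducible π) {πE : integralClosure (OF F) E}
    (hram : Associated (πE ^ 2) (algebraMap (OF F) (integralClosure (OF F) E) π))
    {a : OF F} (ha : a ≠ 0) :
    ∃ (k : ℕ) (w : integralClosure (OF F) E), IsUnit w ∧
      algebraMap (OF F) (integralClosure (OF F) E) a = w * πE ^ (2 * k) := by
  obtain ⟨n, u, hu⟩ := IsDiscreteValuationRing.eq_unit_mul_pow_irreducible ha hπ
  obtain ⟨v, hv⟩ := id hram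
  refine ⟨n, algebraMap (OF F) (integralClosure (OF F) E) (u : OF F) * (v : _) ^ n, ?_, ?_⟩
  · exact (u.isUnit.map _).mul (v.isUnit.pow n)
  · rw [hu, map_mul, map_pow, ← hv, mul_pow, pow_mul, ← mul_assoc]
    exact mul_right_comm _ _ _


lemma stable_of_multO {π : OF F} {L : Submodule (OF F) E}
    (hL0 : mult F E L = ordSet F E π 0) :
    ∀ b : integralClosure (OF F) E, ∀ y ∈ L, (b : E) * y ∈ L := by
  intro b y hy
  have hb : (b : E) ∈ mult F E L := by
    rw [hL0, ordSet_zero]; exact b.2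
  exact hb y hy

@[simp] lemma coe_algebraMapO (a : OF F) :
    ((algebraMap (OF F) (integralClosure (OF F) E) a : integralClosure (OF F) E) : E)
      = algebraMap F E (a : F) := rfl

lemma exists_gen [IsDiscreteValuationRing (integralClosure (OF F) E)]
    (hquad : Module.finrank F E = 2)
    {L : Submodule (OF F) E} (hL : IsLattice F E L)
    (hst : ∀ b : integralClosure (OF F) E, ∀ y ∈ L, (b : E) * y ∈ L) :
    ∃ x : E, x ≠ 0 ∧ (L : Set E) = x • (integralClosure (OF F) E : Set E) := by
  haveI : FiniteDimensional F E := FiniteDimensional.of_finrank_eq_succ hquad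
  haveI : IsFractionRing (integralClosure (OF F) E) E :=
    integralClosure.isFractionRing_of_finite_extension F E
  obtain ⟨s, hs⟩ := hL.1
  obtain ⟨cden, hcden⟩ :=
    IsLocalization.exist_integer_multiples_of_finset
      (nonZeroDivisors (integralClosure (OF F) E)) s
  set c : integralClosure (OF F) E := (cden : integralClosure (OF F) E) with hcdef
  have hc0 : (c : E) ≠ 0 := by
    intro h0
    have : c = 0 := Subtype.coe_injective h0
    exact nonZeroDivisors.coe_ne_zero cden this
  have hcl : ∀ y ∈ L, ∃ b : integralClosure (OF F) E, (b : E) = (c : E) * y := by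
    have hsub : L ≤ Submodule.comap (mulE F E (c : E))
        (Subalgebra.toSubmodule (integralClosure (OF F) E)) := by
      rw [← hs, Submodule.span_le]
      intro y hy
      obtain ⟨b, hb⟩ := hcden y hy
      have hmem : (c : E) * y ∈ integralClosure (OF F) E := by
        rw [show (c : E) * y = c • y from rfl, ← hb]; exact b.2
      simpa [mulE] using hmem
    intro y hy
    have hmem := hsub hy
    simp only [Submodule.mem_comap] at hmem
    exact ⟨⟨(c : E) * y, by simpa [mulE] using hmem⟩, rfl⟩
  have hex : ∃ y ∈ L, y ≠ (0 : E) := by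
    by_contra hcon
    push_neg at hcon
    have hsub : (L : Set E) ⊆ {0} := fun y hy => hcon y hy
    have h1 : (1 : E) ∈ Submodule.span F (L : Set E) := by rw [hL.2]; trivial
    have h2 := Submodule.span_mono (R := F) hsub h1
    simp at h2
  obtain ⟨y0, hy0L, hy00⟩ := hex
  -- the ideal of numerators: preimage in O of c • (span_O of L)
  let J : Submodule (integralClosure (OF F) E) E :=
    Submodule.span (integralClosure (OF F) E) (L : Set E)
  have hJ : (J : Set E) = (L : Set E) := by
    apply subset_antisymm
    · intro z hz
      refine Submodule.span_induction (fun y hy => hy) (zero_mem L) ?_ ?_ hz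
      · intro y1 y2 _ _ h1 h2; exact add_mem h1 h2
      · intro o y _ hy; exact hst o y hy
    · exact Submodule.subset_span
  let I : Ideal (integralClosure (OF F) E) :=
    Submodule.comap (Algebra.linearMap (integralClosure (OF F) E) E)
      (Submodule.map (LinearMap.mulLeft (integralClosure (OF F) E) (c : E)) J)
  have hImem : ∀ o : integralClosure (OF F) E,
      o ∈ I ↔ ∃ y ∈ L, (o : E) = (c : E) * y := by
    intro o
    simp only [I, Submodule.mem_comap, Submodule.mem_map, LinearMap.mulLeft_apply,
      Algebra.linearMap_apply]
    constructor
    · rintro ⟨y, hy, h⟩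
      have : y ∈ (J : Set E) := hy
      rw [hJ] at this
      exact ⟨y, this, h.symm⟩
    · rintro ⟨y, hy, h⟩
      refine ⟨y, ?_, h.symm⟩
      show y ∈ (J : Set E)
      rw [hJ]; exact hy
  obtain ⟨g, hgI⟩ := (IsPrincipalIdealRing.principal I).1
  have hg0 : g ≠ 0 := by
    intro h0
    obtain ⟨b0, hb0⟩ := hcl y0 hy0L
    have hb0I : b0 ∈ I := (hImem b0).mpr ⟨y0, hy0L, hb0⟩
    rw [hgI, h0] at hb0I
    obtain ⟨o, ho⟩ := Submodule.mem_span_singleton.mp hb0I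
    have hb00 : b0 = 0 := by rw [← ho]; simp
    rw [hb00] at hb0
    exact mul_ne_zero hc0 hy00 (by simpa using hb0.symm)
  have hgE : (g : E) ≠ 0 := fun h => hg0 (Subtype.coe_injective (by simpa using h))
  refine ⟨(g : E) * (c : E)⁻¹, mul_ne_zero hgE (inv_ne_zero hc0), ?_⟩
  ext z
  constructor
  · intro hz
    obtain ⟨b, hb⟩ := hcl z hz
    have hbI : b ∈ I := (hImem b).mpr ⟨z, hz, hb⟩
    rw [hgI] at hbI
    obtain ⟨o, ho⟩ := Submodule.mem_span_singleton.mp hbI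
    rw [← ho] at hb
    rw [smul_eq_mul, mul_comm] at hb
    refine (mem_smul_O F E).mpr ⟨o, ?_⟩
    have hco : (c : E) * z = (g : E) * (o : E) := by
      rw [← hb]; push_cast; ring
    apply mul_left_cancel₀ hc0
    rw [hco]
    field_simp
  · intro hz
    obtain ⟨o, rfl⟩ := (mem_smul_O F E).mp hz
    have hgmemI : g ∈ I := by rw [hgI]; exact Submodule.mem_span_singleton_self g
    obtain ⟨y1, hy1, hgy1⟩ := (hImem g).mp hgmemI
    have : (g : E) * (c : E)⁻¹ * (o : E) = (o : E) * y1 := by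
      rw [hgy1]; field_simp
    rw [this]
    exact hst o y1 hy1



@[simp] lemma algebraMapOF_coe (a : OF F) :
    algebraMap (OF F) E a = algebraMap F E (a : F) := rfl

lemma nonhom_core [IsDiscreteValuationRing (OF F)]
    [IsDiscreteValuationRing (integralClosure (OF F) E)]
    {π : OF F} (hπ : Irreducible π) {πE : integralClosure (OF F) E} (hπE : Irreducible πE)
    (hram : Associated (πE ^ 2) (algebraMap (OF F) (integralClosure (OF F) E) π))
    {c : F} (hc : c ≠ 0) {o : integralClosure (OF F) E} (hou : IsUnit o)
    (hco : (πE : E) = algebraMap F E c * (o : E)) : False := by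
  obtain ⟨pq, hpq⟩ := IsLocalization.surj (nonZeroDivisors (OF F)) c
  have hq0 : (pq.2 : OF F) ≠ 0 := nonZeroDivisors.coe_ne_zero pq.2
  have hqF : algebraMap (OF F) F (pq.2 : OF F) ≠ 0 :=
    fun h => hq0 (Subtype.coe_injective (by simpa using h))
  have hp0 : pq.1 ≠ 0 := by
    intro h0
    rw [h0, map_zero] at hpq
    exact (mul_ne_zero hc hqF) hpq
  have hpqE : algebraMap F E c * algebraMap F E ((pq.2 : OF F) : F)
      = algebraMap F E ((pq.1 : OF F) : F) := by
    have h := congrArg (algebraMap F E) hpq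
    rw [map_mul] at h
    exact h
  have hPQ : algebraMap (OF F) (integralClosure (OF F) E) pq.1 * o
      = algebraMap (OF F) (integralClosure (OF F) E) (pq.2 : OF F) * πE := by
    apply Subtype.coe_injective
    push_cast [coe_algebraMapO]
    simp only [algebraMapOF_coe F E]
    rw [← hpqE, hco]; ring
  obtain ⟨k, w1, hw1, hP⟩ := of_OF_even F E hπ hram hp0
  obtain ⟨j, w2, hw2, hQ⟩ := of_OF_even F E hπ hram hq0
  rw [hP, hQ] at hPQ
  have hPQ' : (w1 * o) * πE ^ (2 * k) = w2 * πE ^ (2 * j + 1) := by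
    rw [pow_succ]
    calc (w1 * o) * πE ^ (2 * k) = w1 * πE ^ (2 * k) * o := by ring
      _ = w2 * πE ^ (2 * j) * πE := hPQ
      _ = w2 * (πE ^ (2 * j) * πE) := by ring
  have hodd := unit_pow_eq F E hπE (hw1.mul hou) hw2 hPQ'
  omega

lemma uniq_core [IsDiscreteValuationRing (OF F)]
    [IsDiscreteValuationRing (integralClosure (OF F) E)]
    {π : OF F} (hπ : Irreducible π) {πE : integralClosure (OF F) E} (hπE : Irreducible πE)
    (hram : Associated (πE ^ 2) (algebraMap (OF F) (integralClosure (OF F) E) π))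
    {A B : E} (hA : A ≠ 0) (hB : B ≠ 0)
    (hsub2 : B • (integralClosure (OF F) E : Set E) ⊂ A • (integralClosure (OF F) E : Set E))
    (hsub1 : (algebraMap F E (π : F) * A) • (integralClosure (OF F) E : Set E)
      ⊂ B • (integralClosure (OF F) E : Set E)) :
    ∃ u : integralClosure (OF F) E, IsUnit u ∧ B = A * ((u : E) * (πE : E)) := by
  obtain ⟨v, hv⟩ := id hram
  have hvE : (πE : E) ^ 2 * ((v : integralClosure (OF F) E) : E) = algebraMap F E (π : F) := by
    have h := congrArg (Subtype.val) hv
    push_cast at h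
    exact h
  obtain ⟨o1, ho1, ho1u⟩ := (smul_O_ssubset F E hA).mp hsub2
  obtain ⟨o2, ho2, ho2u⟩ := (smul_O_ssubset F E hB).mp hsub1
  have ho1ne : (o1 : E) ≠ 0 := fun h0 => hB (by rw [ho1, h0, mul_zero])
  have ho1ne' : o1 ≠ 0 := fun h => ho1ne (by rw [h]; simp)
  have hππ : algebraMap F E ((π : OF F) : F) = (o1 : E) * (o2 : E) := by
    apply mul_right_cancel₀ hA
    rw [ho2, ho1]; ring
  have hπF : ((π : OF F) : F) ≠ 0 :=
    fun h => hπ.ne_zero (Subtype.coe_injective (by simpa using h))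
  have hπ' : algebraMap F E ((π : OF F) : F) ≠ 0 := algebraMap_ne_zero F E hπF
  have ho2ne : (o2 : E) ≠ 0 := by
    intro h0; rw [h0, mul_zero] at hππ; exact hπ' hππ
  have ho2ne' : o2 ≠ 0 := fun h => ho2ne (by rw [h]; simp)
  obtain ⟨t1, u1, hu1⟩ := IsDiscreteValuationRing.eq_unit_mul_pow_irreducible ho1ne' hπE
  obtain ⟨t2, u2, hu2⟩ := IsDiscreteValuationRing.eq_unit_mul_pow_irreducible ho2ne' hπE
  have hO : πE ^ 2 * (v : integralClosure (OF F) E) = o1 * o2 := by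
    apply Subtype.coe_injective
    push_cast
    rw [hvE]
    exact hππ
  rw [hu1, hu2] at hO
  have hO' : ((v : integralClosure (OF F) E)) * πE ^ 2
      = ((u1 : integralClosure (OF F) E) * (u2 : integralClosure (OF F) E))
        * πE ^ (t1 + t2) := by
    rw [pow_add]
    calc ((v : integralClosure (OF F) E)) * πE ^ 2
        = πE ^ 2 * (v : integralClosure (OF F) E) := mul_comm _ _
      _ = (u1 : integralClosure (OF F) E) * πE ^ t1
            * ((u2 : integralClosure (OF F) E) * πE ^ t2) := hO
      _ = ((u1 : integralClosure (OF F) E) * (u2 : integralClosure (OF F) E))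
            * (πE ^ t1 * πE ^ t2) := by ring
  have ht12 := unit_pow_eq F E hπE v.isUnit (u1.isUnit.mul u2.isUnit) hO'
  have ht1 : t1 ≠ 0 := by
    intro h
    rw [h, pow_zero, mul_one] at hu1
    exact ho1u (hu1 ▸ u1.isUnit)
  have ht2 : t2 ≠ 0 := by
    intro h
    rw [h, pow_zero, mul_one] at hu2
    exact ho2u (hu2 ▸ u2.isUnit)
  have ht1e : t1 = 1 := by omega
  refine ⟨u1, u1.isUnit, ?_⟩
  have hu1E : (o1 : E) = ((u1 : integralClosure (OF F) E) : E) * (πE : E) := by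
    have h := congrArg Subtype.val hu1
    push_cast at h
    rw [ht1e, pow_one] at h
    exact h
  rw [ho1, hu1E]

lemma m_le_one [IsDiscreteValuationRing (OF F)]
    [IsDiscreteValuationRing (integralClosure (OF F) E)]
    {π : OF F} (hπ : Irreducible π) {πE : integralClosure (OF F) E} (hπE : Irreducible πE)
    (hram : Associated (πE ^ 2) (algebraMap (OF F) (integralClosure (OF F) E) π))
    {M M' : Submodule (OF F) E} {g : E}
    (hMx : (M : Set E) = g • (integralClosure (OF F) E : Set E))
    (hsub1 : algebraMap F E (π : F) • (M : Set E) ⊆ (M' : Set E))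
    (hsub2 : (M' : Set E) ⊆ (M : Set E))
    {m : ℕ} (hmult : mult F E M' = ordSet F E π m) (h2m : 2 ≤ m) : False := by
  obtain ⟨v, hv⟩ := id hram
  have hkey : algebraMap F E ((π : OF F) : F) * (πE : E) ∈ mult F E M' := by
    intro y hy
    have hyM' : y ∈ (M' : Set E) := hy
    have hyM : y ∈ (M : Set E) := hsub2 hyM'
    have h1 : (πE : E) * y ∈ (M : Set E) := by
      rw [hMx] at hyM ⊢
      obtain ⟨o, rfl⟩ := (mem_smul_O F E).mp hyM
      exact (mem_smul_O F E).mpr ⟨πE * o, by push_cast; ring⟩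
    have h2 : algebraMap F E ((π : OF F) : F) * ((πE : E) * y) ∈ (M' : Set E) :=
      hsub1 ⟨(πE : E) * y, h1, rfl⟩
    show algebraMap F E ((π : OF F) : F) * (πE : E) * y ∈ M'
    rw [mul_assoc]
    exact h2
  rw [hmult] at hkey
  obtain ⟨a, b, hab⟩ := hkey
  have habO : algebraMap (OF F) (integralClosure (OF F) E) π * πE
      = algebraMap (OF F) (integralClosure (OF F) E) a
        + (algebraMap (OF F) (integralClosure (OF F) E) π) ^ m * b := by
    apply Subtype.coe_injective
    push_cast [coe_algebraMapO]
    simp only [algebraMapOF_coe F E] at hab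
    exact hab
  have hπE4 : πE ^ 4 ∣ algebraMap (OF F) (integralClosure (OF F) E) a := by
    by_cases ha0 : a = 0
    · rw [ha0, map_zero]; exact dvd_zero _
    · have h3 : πE ^ 3 ∣ algebraMap (OF F) (integralClosure (OF F) E) a := by
        have heq : algebraMap (OF F) (integralClosure (OF F) E) a
            = algebraMap (OF F) (integralClosure (OF F) E) π * πE
              - (algebraMap (OF F) (integralClosure (OF F) E) π) ^ m * b := by
          rw [habO]; ring
        rw [heq, ← hv]
        have d1 : πE ^ 3 ∣ πE ^ 2 * (v : integralClosure (OF F) E) * πE :=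
          ⟨(v : integralClosure (OF F) E), by ring⟩
        have d2 : πE ^ 3 ∣ (πE ^ 2 * (v : integralClosure (OF F) E)) ^ m * b := by
          have he : (πE ^ 2 * (v : integralClosure (OF F) E)) ^ m * b
              = πE ^ (2 * m) * ((v : integralClosure (OF F) E) ^ m * b) := by
            rw [mul_pow, pow_mul]; ring
          rw [he]
          exact (pow_dvd_pow πE (by omega)).mul_right _
        exact dvd_sub d1 d2
      obtain ⟨k, w, hw, hwa⟩ := of_OF_even F E hπ hram ha0
      rw [hwa] at h3 ⊢
      rw [hw.dvd_mul_left] at h3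
      have h2k := (pow_dvd_pow_iff hπE.ne_zero hπE.not_isUnit).mp h3
      exact (pow_dvd_pow πE (by omega)).mul_left w
  have hfin : πE ^ 4 ∣ πE ^ 2 * (v : integralClosure (OF F) E) * πE := by
    have he : πE ^ 2 * (v : integralClosure (OF F) E) * πE
        = algebraMap (OF F) (integralClosure (OF F) E) a
          + (πE ^ 2 * (v : integralClosure (OF F) E)) ^ m * b := by
      rw [hv]; exact habO
    rw [he]
    refine dvd_add hπE4 ?_
    have he2 : (πE ^ 2 * (v : integralClosure (OF F) E)) ^ m * b
        = πE ^ (2 * m) * ((v : integralClosure (OF F) E) ^ m * b) := by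
      rw [mul_pow, pow_mul]; ring
    rw [he2]
    exact (pow_dvd_pow πE (by omega)).mul_right _
  have hfin2 : πE ^ 4 ∣ (v : integralClosure (OF F) E) * πE ^ 3 := by
    have he : πE ^ 2 * (v : integralClosure (OF F) E) * πE
        = (v : integralClosure (OF F) E) * πE ^ 3 := by ring
    rwa [he] at hfin
  rw [v.isUnit.dvd_mul_left] at hfin2
  have h43 := (pow_dvd_pow_iff hπE.ne_zero hπE.not_isUnit).mp hfin2
  omega

/-- Assume `E/F` is ramified, i.e. a uniformizer `π_E` of the valuation ring
`O_E` of `E` satisfies `π_E² ∼ π` (associated in `O_E`). Let `L` be a lattice with `l(L) = 0`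
(equivalently `O_E·L ⊆ L`, i.e. `O_L = O_E`). Then `[π_E·L]` is adjacent to `[L]`, satisfies
`l(π_E·L) = 0`, and is the unique class adjacent to `[L]` with `l = 0`; every other class
adjacent to `[L]` satisfies `l = 1`. -/
theorem adjacent_classes_ramified_case
    [IsDiscreteValuationRing (OF F)] [Finite (IsLocalRing.ResidueField (OF F))]
    [IsDiscreteValuationRing (integralClosure (OF F) E)]
    (π : OF F) (hπ : Irreducible π)
    (hquad : Module.finrank F E = 2)
    (πE : integralClosure (OF F) E) (hπE : Irreducible πE)
    (hram : Associated (πE ^ 2) (algebraMap (OF F) (integralClosure (OF F) E) π))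
    (L : Submodule (OF F) E) (hL : IsLattice F E L)
    (hL0 : mult F E L = ordSet F E π 0) :
    ∃ L' : Submodule (OF F) E, IsLattice F E L' ∧
      (L' : Set E) = (πE : E) • (L : Set E) ∧
      Adjacent F E π L L' ∧
      mult F E L' = ordSet F E π 0 ∧
      (∀ L'' : Submodule (OF F) E, IsLattice F E L'' → Adjacent F E π L L'' →
          mult F E L'' = ordSet F E π 0 → Homothetic F E L' L'') ∧
      (∀ L'' : Submodule (OF F) E, IsLattice F E L'' → Adjacent F E π L L'' →
          ¬ Homothetic F E L'' L' →
          ∀ m : ℕ, mult F E L'' = ordSet F E π m → m = 1) := by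
  classical
  have hπE0 : (πE : E) ≠ 0 := fun h => hπE.ne_zero (Subtype.coe_injective (by simpa using h))
  have hst := stable_of_multO F E hL0
  obtain ⟨x, hx, hLx⟩ := exists_gen F E hquad hL hst
  obtain ⟨v, hv⟩ := id hram
  have hvE : (πE : E) ^ 2 * ((v : integralClosure (OF F) E) : E) = algebraMap F E (π : F) := by
    have h := congrArg (Subtype.val) hv
    push_cast at h
    exact h
  set L' : Submodule (OF F) E := Submodule.map (mulE F E (πE : E)) L with hL'def
  have hL'set : (L' : Set E) = (πE : E) • (L : Set E) := by
    rw [hL'def, Submodule.map_coe]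
    ext z
    constructor
    · rintro ⟨y, hy, rfl⟩; exact ⟨y, hy, rfl⟩
    · rintro ⟨y, hy, rfl⟩; exact ⟨y, hy, rfl⟩
  have hL'lat : IsLattice F E L' := lattice_of_set_eq F E hπE0 hL'set hL
  have hL'x : (L' : Set E) = ((πE : E) * x) • (integralClosure (OF F) E : Set E) := by
    rw [hL'set, hLx, smul_smul]
  have hπx : (πE : E) * x ≠ 0 := mul_ne_zero hπE0 hx
  have hnho : ¬ Homothetic F E L L' := by
    rintro ⟨c, hc, hcs⟩
    rw [hL'x, F_smul_set F E c, hLx, smul_smul] at hcs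
    have hc' : algebraMap F E c ≠ 0 := algebraMap_ne_zero F E hc
    obtain ⟨o, ho, hou⟩ := (smul_O_eq F E (mul_ne_zero hc' hx)).mp hcs
    have hco : (πE : E) = algebraMap F E c * (o : E) := by
      apply mul_right_cancel₀ hx
      rw [ho]; ring
    exact nonhom_core F E hπ hπE hram hc hou hco
  have huniq : ∀ L'' : Submodule (OF F) E, IsLattice F E L'' → Adjacent F E π L L'' →
      mult F E L'' = ordSet F E π 0 → Homothetic F E L' L'' := by
    rintro L'' hL''lat ⟨hnh, M, M', ⟨c, hc, hMs⟩, ⟨d, hd, hM's⟩, hsub1, hsub2⟩ hm0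
    have hst'' := stable_of_multO F E hm0
    obtain ⟨z, hz0, hzset⟩ := exists_gen F E hquad hL''lat hst''
    have hc' : algebraMap F E c ≠ 0 := algebraMap_ne_zero F E hc
    have hd' : algebraMap F E d ≠ 0 := algebraMap_ne_zero F E hd
    have hMx : (M : Set E) = (algebraMap F E c * x) • (integralClosure (OF F) E : Set E) := by
      rw [hMs, F_smul_set F E c, hLx, smul_smul]
    have hM'z : (M' : Set E) = (algebraMap F E d * z) • (integralClosure (OF F) E : Set E) := by
      rw [hM's, F_smul_set F E d, hzset, smul_smul]
    rw [hMx, hM'z] at hsub2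
    rw [hMx, hM'z, smul_smul] at hsub1
    obtain ⟨u, huu, hBA⟩ :=
      uniq_core F E hπ hπE hram (mul_ne_zero hc' hx) (mul_ne_zero hd' hz0) hsub2 hsub1
    refine ⟨d⁻¹ * c, mul_ne_zero (inv_ne_zero hd) hc, ?_⟩
    rw [hzset, F_smul_set F E (d⁻¹ * c), hL'x, smul_smul]
    have hbne : algebraMap F E (d⁻¹ * c) * ((πE : E) * x) ≠ 0 :=
      mul_ne_zero (algebraMap_ne_zero F E (mul_ne_zero (inv_ne_zero hd) hc)) hπx
    refine (smul_O_eq F E hbne).mpr ⟨u, ?_, huu⟩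
    apply mul_left_cancel₀ hd'
    rw [hBA, map_mul, map_inv₀]
    field_simp
  refine ⟨L', hL'lat, hL'set,
    ⟨hnho, L, L', ⟨1, one_ne_zero, by simp⟩, ⟨1, one_ne_zero, by simp⟩, ?_, ?_⟩,
    ?_, huniq, ?_⟩
  · rw [hLx, smul_smul, hL'x]
    refine (smul_O_ssubset F E hπx).mpr ⟨πE * (v : integralClosure (OF F) E), ?_, ?_⟩
    · push_cast
      rw [← hvE]; ring
    · intro hu
      exact hπE.not_isUnit (isUnit_of_mul_isUnit_left hu)
  · rw [hLx, hL'x]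
    exact (smul_O_ssubset F E hx).mpr ⟨πE, by ring, hπE.not_isUnit⟩
  · rw [mult_eq_of_smul F E hπE0 hL'set]
    exact hL0
  · rintro L'' hL''lat hadj hnotH m hm
    by_contra hm1
    have hm0 : m ≠ 0 := by
      intro h0
      rw [h0] at hm
      exact hnotH (homothetic_symm F E (huniq L'' hL''lat hadj hm))
    obtain ⟨hnh, M, M', ⟨c, hc, hMs⟩, ⟨d, hd, hM's⟩, hsub1, hsub2⟩ := hadj
    have hc' : algebraMap F E c ≠ 0 := algebraMap_ne_zero F E hc
    have hd' : algebraMap F E d ≠ 0 := algebraMap_ne_zero F E hd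
    have hMx : (M : Set E) = (algebraMap F E c * x) • (integralClosure (OF F) E : Set E) := by
      rw [hMs, F_smul_set F E c, hLx, smul_smul]
    have hM'd : (M' : Set E) = algebraMap F E d • (L'' : Set E) := by
      rw [hM's, F_smul_set F E d]
    have hmultM' : mult F E M' = ordSet F E π m := by
      rw [mult_eq_of_smul F E hd' hM'd]
      exact hm
    exact m_le_one F E hπ hπE hram hMx hsub1.subset hsub2.subset hmultM' (by omega)
end
end

section
/- Let N be an abelian group. For a locally constant compactly supported function f: F → N, the extension f̄ of f to the one-point compactification OnePoint F = F ∪ {∞} defined by f̄(∞) = 0 is locally constant. Moreover, the map sending f to the class of f̄ modulo constant functions is a group isomorphism from C_c⁰(F, N) onto LocallyConstant(OnePoint F, N)/{constant functions}. -/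
/-!
`F` is a nonarchimedean local field: a field complete with respect to a discrete valuation
(encoded by `Valued F ℤₘ₀`, `CompleteSpace F`, the valuation ring being a DVR) with finite
residue field. `N` is an abelian group. `C_c⁰(F, N)` is encoded by the predicates
`IsLocallyConstant` and `HasCompactSupport`. `OnePoint F = F ∪ {∞}` is the one-point
compactification of `F`.
-/

open scoped Multiplicative

noncomputable section

variable (F : Type*) [Field F] [Valued F (WithZero (Multiplicative ℤ))] [CompleteSpace F]

variable (N : Type*) [AddCommGroup N]

/-- The extension `f̄` of `f : F → N` to the one-point compactification, with `f̄(∞) = 0`. -/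
def fbar (f : F → N) : OnePoint F → N := fun x => Option.elim x 0 f

/-- For locally constant compactly supported `f : F → N`, the extension
`f̄` with `f̄(∞) = 0` is locally constant on `OnePoint F`; moreover `f ↦ f̄ mod constants` is
a group isomorphism from `C_c⁰(F, N)` onto `LocallyConstant(OnePoint F, N)/{constants}`:
it is additive, injective modulo constants, and surjective modulo constants. -/
theorem fbar_locallyConstant_and_iso_onto_steinberg
    [IsDiscreteValuationRing (OF F)] [Finite (IsLocalRing.ResidueField (OF F))] :
    (∀ f : F → N, IsLocallyConstant f → HasCompactSupport f →
        IsLocallyConstant (fbar F N f)) ∧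
    (∀ f g : F → N, fbar F N (f + g) = fbar F N f + fbar F N g) ∧
    (∀ f g : F → N, IsLocallyConstant f → HasCompactSupport f →
        IsLocallyConstant g → HasCompactSupport g →
        ((∃ c : N, ∀ x : OnePoint F, fbar F N f x = fbar F N g x + c) ↔ f = g)) ∧
    (∀ h : OnePoint F → N, IsLocallyConstant h →
        ∃ f : F → N, IsLocallyConstant f ∧ HasCompactSupport f ∧
          ∃ c : N, ∀ x : OnePoint F, h x = fbar F N f x + c) := by
  refine ⟨?_, ?_, ?_, ?_⟩
  · -- local constancy of fbar
    intro f hf hsupp s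
    have hpre : (OnePoint.some : F → OnePoint F) ⁻¹' (fbar F N f ⁻¹' s) = f ⁻¹' s := rfl
    rw [OnePoint.isOpen_def]
    refine ⟨fun hinf => ?_, by rw [hpre]; exact hf s⟩
    have h0 : (0 : N) ∈ s := hinf
    rw [hpre]
    refine hsupp.of_isClosed_subset (isClosed_compl_iff.2 (hf s)) ?_
    intro x hx
    have : f x ≠ 0 := fun h => hx (by rw [Set.mem_preimage, h]; exact h0)
    exact subset_tsupport f this
  · -- additivity
    intro f g
    funext x
    cases x
    · show (0:N) = 0 + 0; rw [add_zero]
    · rfl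
  · -- injectivity mod constants
    intro f g hf hfs hg hgs
    constructor
    · rintro ⟨c, hc⟩
      have h0 := hc OnePoint.infty
      simp only [fbar, Option.elim, zero_add] at h0
      subst h0
      funext x
      have := hc (OnePoint.some x)
      simpa using (show f x = g x + 0 from this)
    · rintro rfl
      exact ⟨0, fun x => by simp⟩
  · -- surjectivity mod constants
    intro h hl
    set c : N := h OnePoint.infty with hc
    set f : F → N := fun x => h (OnePoint.some x) - c with hfdef
    have hflc : IsLocallyConstant f := by
      have : IsLocallyConstant fun x : F => h (OnePoint.some x) :=
        hl.comp_continuous OnePoint.continuous_coe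
      exact this.sub (IsLocallyConstant.const c)
    have hU : IsOpen (h ⁻¹' {c}) := hl.isOpen_fiber c
    have hinf : OnePoint.infty ∈ h ⁻¹' {c} := rfl
    rw [OnePoint.isOpen_iff_of_mem' hinf] at hU
    have hKc : IsCompact ((OnePoint.some : F → OnePoint F) ⁻¹' (h ⁻¹' {c}))ᶜ := hU.1
    have hKcl : IsClosed ((OnePoint.some : F → OnePoint F) ⁻¹' (h ⁻¹' {c}))ᶜ :=
      isClosed_compl_iff.2 hU.2
    have hsub : Function.support f ⊆ ((OnePoint.some : F → OnePoint F) ⁻¹' (h ⁻¹' {c}))ᶜ := by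
      intro x hx hmem
      exact hx (by simpa [hfdef, sub_eq_zero] using hmem)
    refine ⟨f, hflc, hKc.of_isClosed_subset (isClosed_tsupport f)
      (closure_minimal hsub hKcl), c, fun x => ?_⟩
    cases x
    · simp [fbar, hc, OnePoint.infty]
    · show h _ = _ - c + c
      rw [sub_add_cancel]
end
end

section
/- For every x ∈ F^*, the function z(x): F → A is locally constant with compact support. Moreover, the cocycle identity z(x₁·x₂)(y) = z(x₂)(x₁⁻¹·y) + z(x₁)(y) holds for all x₁, x₂ ∈ F^* and all y ∈ F; that is, x ↦ z(x) is a 1-cocycle of F^* with values in the compactly supported locally constant A-valued functions on F, where F^* acts by (x·f)(y) = f(x⁻¹·y). -/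
/-!
`F` is a nonarchimedean local field: a field complete with respect to a discrete valuation
(encoded by `Valued F ℤₘ₀`, `CompleteSpace F`, the valuation ring `O` being a DVR) with
finite residue field. `A` is an abelian group and `l : F^* → A` is a locally constant group
homomorphism; `l̃ : F → A` extends `l` by `l̃(0) = 0`. For `x ∈ F^*` the function
`z(x) : F → A` is `z(x)(y) = [y ∈ x·O]·l(x) + ([y ∈ O] − [y ∈ x·O])·l̃(y)`.
-/

open scoped Multiplicative Pointwise

noncomputable section

variable (F : Type*) [Field F] [Valued F (WithZero (Multiplicative ℤ))] [CompleteSpace F]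

variable (A : Type*) [AddCommGroup A]

open Classical in
/-- `l̃ : F → A`: the extension of `l : F^* → A` by `l̃(0) = 0`. -/
def lhat (l : Fˣ → A) : F → A :=
  fun y => if h : y = 0 then 0 else l (Units.mk0 y h)

open Classical in
/-- The cocycle `z(x)(y) = [y ∈ x·O]·l(x) + ([y ∈ O] − [y ∈ x·O])·l̃(y)`. -/
def zcoc (l : Fˣ → A) (x : Fˣ) (y : F) : A :=
  (if y ∈ (x : F) • ((OF F : ValuationSubring F) : Set F) then l x else 0) +
    ((if y ∈ ((OF F : ValuationSubring F) : Set F) then lhat F A l y else 0) -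
      (if y ∈ (x : F) • ((OF F : ValuationSubring F) : Set F) then lhat F A l y else 0))

open Topology Filter

local notation "ℤₘ₀" => WithZero (Multiplicative ℤ)

namespace ZcocAux

lemma exists_pow_lt (ζ : ℤₘ₀) (h0 : ζ ≠ 0) (h1 : ζ < 1) (γ : ℤₘ₀ˣ) :
    ∃ n : ℕ, ζ ^ n < (γ : ℤₘ₀) := by
  obtain ⟨a, rfl⟩ := WithZero.ne_zero_iff_exists.mp h0
  obtain ⟨g, hg⟩ := WithZero.ne_zero_iff_exists.mp γ.ne_zero
  rw [← hg]
  refine ⟨(Multiplicative.toAdd g).natAbs + 1, ?_⟩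
  rw [← WithZero.coe_pow, WithZero.coe_lt_coe]
  rw [← WithZero.coe_one, WithZero.coe_lt_coe] at h1
  rw [← Multiplicative.toAdd_lt] at h1 ⊢
  rw [toAdd_pow]
  simp only [toAdd_one, smul_eq_mul] at h1 ⊢
  set m := Multiplicative.toAdd a with hm
  set k := Multiplicative.toAdd g with hk
  have h2 : ((k.natAbs : ℤ) + 1) * m ≤ -((k.natAbs : ℤ) + 1) := by nlinarith
  rw [nsmul_eq_mul]
  push_cast at h2 ⊢
  have h4 : -|k| ≤ k := neg_abs_le k
  linarith

variable {F : Type*} [Field F] [Valued F ℤₘ₀] {A : Type*} [AddCommGroup A]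

lemma mem_O_iff (y : F) :
    y ∈ ((OF F : ValuationSubring F) : Set F) ↔ Valued.v y ≤ (1 : ℤₘ₀) := Iff.rfl

lemma mem_smul_O_iff (x : Fˣ) (y : F) :
    y ∈ (x : F) • ((OF F : ValuationSubring F) : Set F) ↔ Valued.v y ≤ Valued.v (x : F) := by
  have hx : (x : F) ≠ 0 := Units.ne_zero x
  have hv : (0 : ℤₘ₀) < Valued.v (x : F) :=
    zero_lt_iff.mpr ((Valuation.ne_zero_iff _).mpr hx)
  rw [Set.mem_smul_set_iff_inv_smul_mem₀ hx, smul_eq_mul, mem_O_iff, map_mul, map_inv₀,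
    inv_mul_le_iff₀ hv, mul_one]

lemma lhat_zero (l : Fˣ → A) : lhat F A l 0 = 0 := by simp [lhat]

lemma lhat_ne (l : Fˣ → A) {y : F} (hy : y ≠ 0) :
    lhat F A l y = l (Units.mk0 y hy) := by simp [lhat, hy]

open Classical in
lemma zcoc_eq (l : Fˣ → A) (x : Fˣ) (y : F) :
    zcoc F A l x y =
      (if Valued.v y ≤ Valued.v (x : F) then l x else 0) +
        ((if Valued.v y ≤ (1 : ℤₘ₀) then lhat F A l y else 0) -
          (if Valued.v y ≤ Valued.v (x : F) then lhat F A l y else 0)) := by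
  unfold zcoc
  simp only [mem_smul_O_iff, mem_O_iff]

lemma isClosed_O : IsClosed ((OF F : ValuationSubring F) : Set F) := by
  rw [← isOpen_compl_iff, isOpen_iff_mem_nhds]
  intro z hz
  rw [Set.mem_compl_iff, mem_O_iff, not_le] at hz
  have hz0 : Valued.v z ≠ 0 := by
    intro h
    rw [h] at hz
    exact absurd hz (not_lt.mpr zero_le')
  rw [Valued.mem_nhds]
  refine ⟨Units.mk0 (Valued.v.restrict z) (by rwa [Ne, Valuation.restrict_eq_zero_iff]), fun w hw => ?_⟩
  rw [Set.mem_compl_iff, mem_O_iff, not_le]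
  have hw' : Valued.v.restrict (w - z) < Valued.v.restrict z := hw
  have : Valued.v w = Valued.v z := Valuation.map_eq_of_sub_lt _ ((Valuation.restrict_lt_iff _).mp hw')
  rw [this]; exact hz

section Compact

variable [CompleteSpace F] [IsDiscreteValuationRing (OF F)]
  [Finite (IsLocalRing.ResidueField (OF F))]

lemma cover (π : OF F) (hπ : Irreducible π) (hπ0 : (π : F) ≠ 0) (n : ℕ) :
    ∃ S : Finset F, ((OF F : ValuationSubring F) : Set F) ⊆
      ⋃ a ∈ S, {z : F | Valued.v (z - a) ≤ Valued.v (π : F) ^ n} := by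
  classical
  have := Fintype.ofFinite (IsLocalRing.ResidueField (OF F))
  have hsurj : Function.Surjective (IsLocalRing.residue (OF F)) :=
    IsLocalRing.residue_surjective
  set reps : IsLocalRing.ResidueField (OF F) → OF F := Function.surjInv hsurj with hreps
  have hrepsval : ∀ c, IsLocalRing.residue (OF F) (reps c) = c :=
    fun c => Function.surjInv_eq hsurj c
  induction n with
  | zero =>
    refine ⟨{0}, fun z hz => ?_⟩
    simp only [Finset.mem_singleton, Set.mem_iUnion, Set.mem_setOf_eq]
    exact ⟨0, rfl, by rw [sub_zero, pow_zero]; exact (mem_O_iff z).mp hz⟩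
  | succ n ih =>
    obtain ⟨S, hS⟩ := ih
    refine ⟨(S ×ˢ (Finset.univ : Finset (IsLocalRing.ResidueField (OF F)))).image
      (fun p => p.1 + (π : F) ^ n * ((reps p.2 : OF F) : F)), fun y hy => ?_⟩
    obtain ⟨a, haS, hva⟩ := by
      have := hS hy
      simp only [Set.mem_iUnion, Set.mem_setOf_eq, exists_prop] at this
      exact this
    have hπn : ((π : F)) ^ n ≠ 0 := pow_ne_zero _ hπ0
    set w : F := (y - a) / (π : F) ^ n with hw
    have hwO : Valued.v w ≤ 1 := by
      rw [hw, map_div₀, map_pow]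
      rw [div_le_one₀ (zero_lt_iff.mpr (by
        rw [← map_pow]; exact (Valuation.ne_zero_iff _).mpr hπn))]
      rw [← map_pow] at hva ⊢
      exact hva
    set W : OF F := ⟨w, hwO⟩ with hW
    set c := IsLocalRing.residue (OF F) W with hc
    have hmem : W - reps c ∈ IsLocalRing.maximalIdeal (OF F) := by
      have : IsLocalRing.residue (OF F) (W - reps c) = 0 := by
        rw [map_sub, hrepsval c, hc, sub_self]
      exact Ideal.Quotient.eq_zero_iff_mem.mp this
    rw [hπ.maximalIdeal_eq, Ideal.mem_span_singleton] at hmem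
    obtain ⟨d, hd⟩ := hmem
    have hvwr : Valued.v (w - ((reps c : OF F) : F)) ≤ Valued.v (π : F) := by
      have hcoe : w - ((reps c : OF F) : F) = ((W - reps c : OF F) : F) := rfl
      rw [hcoe, hd]
      push_cast
      rw [map_mul]
      calc Valued.v (π : F) * Valued.v ((d : OF F) : F)
          ≤ Valued.v (π : F) * 1 := mul_le_mul_right d.2 _
        _ = Valued.v (π : F) := mul_one _
    simp only [Set.mem_iUnion, Set.mem_setOf_eq, exists_prop, Finset.mem_image,
      Finset.mem_product, Finset.mem_univ, and_true, Prod.exists]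
    refine ⟨a + (π : F) ^ n * ((reps c : OF F) : F), ⟨a, c, haS, rfl⟩, ?_⟩
    have hya : y - a = (π : F) ^ n * w := by
      rw [hw, mul_div_cancel₀ _ hπn]
    have : y - (a + (π : F) ^ n * ((reps c : OF F) : F))
        = (π : F) ^ n * (w - ((reps c : OF F) : F)) := by
      rw [mul_sub, ← hya]; ring
    rw [this, map_mul, map_pow, pow_succ]
    exact mul_le_mul_right hvwr _

lemma isCompact_O : IsCompact ((OF F : ValuationSubring F) : Set F) := by
  obtain ⟨π, hπ⟩ := IsDiscreteValuationRing.exists_irreducible (OF F)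
  have hπ0 : (π : F) ≠ 0 := fun h => hπ.ne_zero (Subtype.ext h)
  have hπv0 : Valued.v (π : F) ≠ 0 := (Valuation.ne_zero_iff _).mpr hπ0
  have hπv1 : Valued.v (π : F) < 1 := by
    have hle : Valued.v (π : F) ≤ 1 := π.2
    rcases lt_or_eq_of_le hle with h | h
    · exact h
    · exfalso
      apply hπ.not_isUnit
      refine IsUnit.of_mul_eq_one (a := π) ⟨(π : F)⁻¹, ?_⟩ (Subtype.ext ?_)
      · show Valued.v ((π : F)⁻¹) ≤ 1
        rw [map_inv₀, h, inv_one]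
      · show ((π : F) * (π : F)⁻¹) = 1
        exact mul_inv_cancel₀ hπ0
  rw [isCompact_iff_totallyBounded_isComplete]
  constructor
  · rw [(Valued.hasBasis_uniformity F ℤₘ₀).totallyBounded_iff]
    intro γ _
    obtain ⟨n, hn⟩ := exists_pow_lt _ hπv0 hπv1 (Units.mk0 (MonoidWithZeroHom.ValueGroup₀.embedding γ.1)
      (fun h => γ.ne_zero (MonoidWithZeroHom.ValueGroup₀.embedding_injective (h.trans (map_zero _).symm))))
    obtain ⟨S, hS⟩ := cover π hπ hπ0 n
    refine ⟨↑S, S.finite_toSet, fun z hz => ?_⟩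
    obtain ⟨a, haS, hva⟩ := by
      have := hS hz
      simp only [Set.mem_iUnion, Set.mem_setOf_eq, exists_prop] at this
      exact this
    simp only [Set.mem_iUnion, Set.mem_setOf_eq, exists_prop, Finset.mem_coe]
    refine ⟨a, haS, ?_⟩
    rw [Valuation.restrict_lt_iff_lt_embedding]
    calc Valued.v (a - z) = Valued.v (z - a) := Valuation.map_sub_swap _ _ _
      _ ≤ Valued.v (π : F) ^ n := hva
      _ < _ := hn
  · exact isClosed_O.isComplete

end Compact

end ZcocAux

open ZcocAux in
/-- For every `x ∈ F^*` the function `z(x) : F → A` is locally constant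
with compact support, and `x ↦ z(x)` is a `1`-cocycle of `F^*` on the compactly supported
locally constant `A`-valued functions on `F` (with `F^*` acting by `(x·f)(y) = f(x⁻¹·y)`):
`z(x₁·x₂)(y) = z(x₂)(x₁⁻¹·y) + z(x₁)(y)`. -/
theorem zcoc_locallyConstant_compactSupport_and_cocycle
    [IsDiscreteValuationRing (OF F)] [Finite (IsLocalRing.ResidueField (OF F))]
    (l : Fˣ → A) (hl : IsLocallyConstant l)
    (hlhom : ∀ u v : Fˣ, l (u * v) = l u + l v) :
    (∀ x : Fˣ, IsLocallyConstant (zcoc F A l x) ∧ HasCompactSupport (zcoc F A l x)) ∧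
    (∀ x₁ x₂ : Fˣ, ∀ y : F,
        zcoc F A l (x₁ * x₂) y = zcoc F A l x₂ (((x₁⁻¹ : Fˣ) : F) * y) + zcoc F A l x₁ y) := by
  classical
  have l1 : l 1 = 0 := by
    have h := hlhom 1 1
    rw [one_mul] at h
    exact (left_eq_add.mp h)
  have linv : ∀ u : Fˣ, l u⁻¹ = -l u := by
    intro u
    have h := hlhom u⁻¹ u
    rw [inv_mul_cancel, l1] at h
    exact eq_neg_of_add_eq_zero_left h.symm
  constructor
  · intro x
    have hx0 : (x : F) ≠ 0 := Units.ne_zero x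
    have hxv0 : Valued.v (x : F) ≠ 0 := (Valuation.ne_zero_iff _).mpr hx0
    constructor
    · rw [IsLocallyConstant.iff_eventually_eq]
      intro y
      by_cases hy : y = 0
      · subst hy
        have hmin : (0 : ℤₘ₀) < min 1 (Valued.v (x : F)) :=
          lt_min zero_lt_one (zero_lt_iff.mpr hxv0)
        have hmem : {z : F | Valued.v z < (Units.mk0 _ hmin.ne' : ℤₘ₀ˣ)} ∈ 𝓝 (0 : F) :=
          by
            have h1 : {z : F | Valued.v z < 1} ∈ 𝓝 (0 : F) := Valued.mem_nhds_zero.mpr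
              ⟨1, fun w hw => (Valuation.restrict_lt_one_iff _).mp (show Valued.v.restrict w < 1 from hw)⟩
            have h2 : {z : F | Valued.v z < Valued.v (x : F)} ∈ 𝓝 (0 : F) := Valued.mem_nhds_zero.mpr
              ⟨Units.mk0 (Valued.v.restrict (x : F)) (by rwa [Ne, Valuation.restrict_eq_zero_iff]),
                fun w hw => (Valuation.restrict_lt_iff _).mp
                  (show Valued.v.restrict w < Valued.v.restrict (x : F) from hw)⟩
            filter_upwards [h1, h2] with w hw1 hw2
            exact lt_min hw1 hw2
        refine Filter.eventually_of_mem hmem fun z hz => ?_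
        have hz' : Valued.v z < min 1 (Valued.v (x : F)) := hz
        have hz1 : Valued.v z ≤ 1 := le_of_lt (lt_of_lt_of_le hz' (min_le_left _ _))
        have hzx : Valued.v z ≤ Valued.v (x : F) :=
          le_of_lt (lt_of_lt_of_le hz' (min_le_right _ _))
        simp only [zcoc_eq, map_zero, lhat_zero, hz1, hzx, zero_le', if_true]
        abel
      · have hvy : Valued.v y ≠ 0 := (Valuation.ne_zero_iff _).mpr hy
        have ev1 : ∀ᶠ z in 𝓝 y, Valued.v z = Valued.v y :=
          Filter.eventually_of_mem (Valued.locally_const hvy) fun z hz => hz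
        have ev2 : ∀ᶠ z in 𝓝 y, ∀ u : Fˣ, (u : F) = z → l u = l (Units.mk0 y hy) := by
          have hu := (IsLocallyConstant.iff_eventually_eq l).1 hl (Units.mk0 y hy)
          rw [Units.isEmbedding_val₀.toIsInducing.nhds_eq_comap, Filter.eventually_comap] at hu
          simpa using hu
        filter_upwards [ev1, ev2] with z hvz hlz
        have hz0 : z ≠ 0 := by
          intro h
          rw [h, map_zero] at hvz
          exact hvy hvz.symm
        have hlhatz : lhat F A l z = lhat F A l y := by
          rw [lhat_ne l hz0, lhat_ne l hy]
          exact hlz (Units.mk0 z hz0) rfl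
        rw [zcoc_eq, zcoc_eq, hvz, hlhatz]
    · refine HasCompactSupport.intro
        (K := ((OF F : ValuationSubring F) : Set F) ∪ (x : F) • ((OF F : ValuationSubring F) : Set F))
        (isCompact_O.union (isCompact_O.smul (x : F))) ?_
      intro y hy
      rw [Set.mem_union, not_or] at hy
      unfold zcoc
      rw [if_neg hy.2, if_neg hy.1, if_neg hy.2]
      abel
  · intro x₁ x₂ y
    by_cases hy : y = 0
    · subst hy
      rw [mul_zero, zcoc_eq, zcoc_eq, zcoc_eq, map_zero, lhat_zero, hlhom x₁ x₂]
      simp only [zero_le', if_true]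
      abel
    · have hx1v : (0 : ℤₘ₀) < Valued.v (x₁ : F) :=
        zero_lt_iff.mpr ((Valuation.ne_zero_iff _).mpr (Units.ne_zero x₁))
      have key : Valued.v (((x₁⁻¹ : Fˣ) : F) * y)
          = (Valued.v ((x₁ : Fˣ) : F))⁻¹ * Valued.v y := by
        rw [map_mul, Units.val_inv_eq_inv_val, map_inv₀]
      have hlh : lhat F A l (((x₁ : F))⁻¹ * y) = -l x₁ + lhat F A l y := by
        have hcoe : ((x₁⁻¹ * Units.mk0 y hy : Fˣ) : F) = ((x₁ : F))⁻¹ * y := by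
          rw [Units.val_mul, Units.val_mk0, Units.val_inv_eq_inv_val]
        rw [← hcoe, lhat_ne l (Units.ne_zero _)]
        have : Units.mk0 ((x₁⁻¹ * Units.mk0 y hy : Fˣ) : F) (Units.ne_zero _)
            = x₁⁻¹ * Units.mk0 y hy := Units.ext rfl
        rw [this, hlhom, linv, lhat_ne l hy]
      simp only [zcoc_eq, hlh, Units.val_mul, map_mul, Units.val_inv_eq_inv_val, map_inv₀,
        inv_mul_le_iff₀ hx1v, mul_one, hlhom x₁ x₂]
      split_ifs <;> abel

end
end
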